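/- Let K ⊂ ℝⁿ be a compact, convex, centrally symmetric (K = −K) body, and let g : K → ℝ be convex, continuous, nonnegative, with g(0) = 0. Then the second modulus of smoothness satisfies ω₂(g;K) ≥ max_{x∈K} g(x). Consequently, the error of best uniform approximation of g by affine functions satisfies E₁(g;K) ≤ (1/2)·ω₂(g;K). -/
import Mathlib

open MvPolynomial

noncomputable def uDist {n : ℕ} (f g : (Fin n → ℝ) → ℝ) (K : Set (Fin n → ℝ)) : ℝ :=
  sSup ((fun x => |f x - g x|) '' K)

noncomputable def polyErr {n : ℕ} (m : ℕ) (f : (Fin n → ℝ) → ℝ) (K : Set (Fin n → ℝ)) : ℝ :=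
  sInf {e | ∃ P : MvPolynomial (Fin n) ℝ, P.totalDegree ≤ m ∧
    e = uDist f (fun x => eval x P) K}

noncomputable def smod {n : ℕ} (m : ℕ) (f : (Fin n → ℝ) → ℝ) (K : Set (Fin n → ℝ)) : ℝ :=
  sSup {v | ∃ x h : Fin n → ℝ, (∀ j ≤ m, x + (j : ℝ) • h ∈ K) ∧
    v = |∑ j ∈ Finset.range (m + 1), (-1 : ℝ) ^ j * (m.choose j) * f (x + (j : ℝ) • h)|}

theorem stmt_2 {n : ℕ} (K : Set (Fin n → ℝ)) (hKc : IsCompact K) (hKconv : Convex ℝ K)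
    (hKint : (interior K).Nonempty) (hsym : ∀ x ∈ K, -x ∈ K)
    (g : (Fin n → ℝ) → ℝ) (hconv : ConvexOn ℝ K g) (hcont : ContinuousOn g K)
    (hnonneg : ∀ x ∈ K, 0 ≤ g x) (hzero : g 0 = 0) :
    sSup (g '' K) ≤ smod 2 g K ∧ polyErr 1 g K ≤ (1 / 2) * smod 2 g K := by
  obtain ⟨x₀, hx₀⟩ := hKint
  have hx₀K : x₀ ∈ K := interior_subset hx₀
  have h0K : (0 : Fin n → ℝ) ∈ K := by
    have h := hKconv hx₀K (hsym _ hx₀K) (by norm_num : (0:ℝ) ≤ 1/2)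
      (by norm_num : (0:ℝ) ≤ 1/2) (by norm_num)
    have : (1/2 : ℝ) • x₀ + (1/2 : ℝ) • (-x₀) = 0 := by
      rw [smul_neg]; exact sub_self _
    rwa [this] at h
  have hBdd : BddAbove (g '' K) := hKc.bddAbove_image hcont
  set M := sSup (g '' K) with hM
  have hMle : ∀ x ∈ K, g x ≤ M := fun x hx => le_csSup hBdd ⟨x, hx, rfl⟩
  have hM0 : 0 ≤ M := hzero ▸ hMle 0 h0K
  set S : Set ℝ := {v | ∃ x h : Fin n → ℝ, (∀ j : ℕ, j ≤ 2 → x + (j : ℝ) • h ∈ K) ∧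
    v = |∑ j ∈ Finset.range (2 + 1), (-1 : ℝ) ^ j * ((2:ℕ).choose j) * g (x + (j : ℝ) • h)|}
      with hS
  have hSbdd : BddAbove S := by
    refine ⟨4 * M, ?_⟩
    rintro v ⟨x, h, hmem, rfl⟩
    have h0 := hmem 0 (by norm_num)
    have h1 := hmem 1 (by norm_num)
    have h2 := hmem 2 (by norm_num)
    simp only [Finset.sum_range_succ, Finset.sum_range_zero]
    norm_num [Nat.choose] at h0 h1 h2 ⊢
    rw [abs_le]
    constructor <;>
      nlinarith [hnonneg _ h0, hMle _ h0, hnonneg _ h1, hMle _ h1, hnonneg _ h2, hMle _ h2]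
  have hsmod : smod 2 g K = sSup S := rfl
  have hkey : ∀ x ∈ K, g x ≤ smod 2 g K := by
    intro x hx
    have hmem : |g x + g (-x)| ∈ S := by
      refine ⟨x, -x, ?_, ?_⟩
      · intro j hj
        interval_cases j
        · simpa using hx
        · have h1 : x + ((1:ℕ):ℝ) • (-x) = 0 := by push_cast; simp
          rw [h1]; exact h0K
        · have h2 : x + ((2:ℕ):ℝ) • (-x) = -x := by
            push_cast; funext i; simp; ring
          rw [h2]; exact hsym _ hx
      · simp only [Finset.sum_range_succ, Finset.sum_range_zero]
        norm_num [Nat.choose]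
        have e2 : x + -((2:ℝ) • x) = -x := by funext i; simp; ring
        rw [hzero, e2]; ring_nf
    calc g x ≤ |g x + g (-x)| := by
          have := hnonneg _ hx
          have := hnonneg _ (hsym _ hx)
          rw [abs_of_nonneg (by linarith)]; linarith
      _ ≤ smod 2 g K := hsmod ▸ le_csSup hSbdd hmem
  have hsmod0 : 0 ≤ smod 2 g K := hzero ▸ hkey 0 h0K
  have part1 : sSup (g '' K) ≤ smod 2 g K := by
    apply Real.sSup_le _ hsmod0
    rintro v ⟨x, hx, rfl⟩
    exact hkey x hx
  refine ⟨part1, ?_⟩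
  have hMsmod : M ≤ smod 2 g K := part1
  -- constant approximation M/2
  have hud : uDist g (fun x => eval x (C (M/2) : MvPolynomial (Fin n) ℝ)) K ≤ M / 2 := by
    apply Real.sSup_le _ (by linarith)
    rintro v ⟨x, hx, rfl⟩
    simp only [eval_C]
    rw [abs_le]
    constructor
    · have := hnonneg _ hx; linarith
    · have := hMle _ hx; linarith
  have hmemE : uDist g (fun x => eval x (C (M/2) : MvPolynomial (Fin n) ℝ)) K ∈
      {e | ∃ P : MvPolynomial (Fin n) ℝ, P.totalDegree ≤ 1 ∧
        e = uDist g (fun x => eval x P) K} :=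
    ⟨C (M/2), by simp [totalDegree_C], rfl⟩
  have hbb : BddBelow {e | ∃ P : MvPolynomial (Fin n) ℝ, P.totalDegree ≤ 1 ∧
      e = uDist g (fun x => eval x P) K} := by
    refine ⟨0, ?_⟩
    rintro e ⟨P, _, rfl⟩
    apply Real.sSup_nonneg
    rintro v ⟨x, hx, rfl⟩
    exact abs_nonneg _
  calc polyErr 1 g K ≤ _ := csInf_le hbb hmemE
    _ ≤ M / 2 := hud
    _ ≤ (1/2) * smod 2 g K := by linarith
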